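/- The rank of the controllability matrix [B, AB, ..., A^{N-1}B] equals N if and only if there is no nonzero vector v ∈ ℝ^N with vᵀA = λvᵀ for some λ and vᵀB = 0 (the PBH eigenvector test, stated over an algebraically closed field ℂ). -/

import Mathlib

open Matrix Polynomial

/-- `X ↦ v ᵥ* X` as a linear map in the matrix `X`. -/
noncomputable def vecMulLeft {N K : ℕ} (v : Fin N → ℂ) :
    Matrix (Fin N) (Fin K) ℂ →ₗ[ℂ] (Fin K → ℂ) where
  toFun X := X.vecMul v
  map_add' X Y := Matrix.vecMul_add X Y v
  map_smul' c X := by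
    ext j
    simp [Matrix.vecMul, dotProduct, Finset.mul_sum, mul_left_comm]

lemma vecMul_pow_mul_eq_zero {N M : ℕ} (hN : 0 < N)
    (A : Matrix (Fin N) (Fin N) ℂ) (B : Matrix (Fin N) (Fin M) ℂ) (v : Fin N → ℂ)
    (h : ∀ i : Fin N, (A ^ (i : ℕ) * B).vecMul v = 0) (k : ℕ) :
    (A ^ k * B).vecMul v = 0 := by
  have hdeg : (X ^ k %ₘ A.charpoly).natDegree < N := by
    by_cases h0 : (X ^ k %ₘ A.charpoly) = 0
    · simpa [h0] using hN
    · have := Polynomial.degree_modByMonic_lt (X ^ k) A.charpoly_monic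
      rw [Polynomial.degree_eq_natDegree (Matrix.charpoly_monic A).ne_zero,
        A.charpoly_natDegree_eq_dim, Fintype.card_fin] at this
      exact_mod_cast (Polynomial.degree_eq_natDegree h0 ▸ this)
  have hpow : A ^ k = ∑ i ∈ Finset.range N, (X ^ k %ₘ A.charpoly).coeff i • A ^ i := by
    rw [Matrix.pow_eq_aeval_mod_charpoly, Polynomial.aeval_eq_sum_range' hdeg]
  calc (A ^ k * B).vecMul v = vecMulLeft v (A ^ k * B) := rfl
    _ = ∑ i ∈ Finset.range N, (X ^ k %ₘ A.charpoly).coeff i •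
          vecMulLeft v (A ^ i * B) := by
        rw [hpow, Matrix.sum_mul, map_sum]
        refine Finset.sum_congr rfl fun i _ => ?_
        rw [Matrix.smul_mul, _root_.map_smul]
    _ = 0 := by
        refine Finset.sum_eq_zero fun i hi => ?_
        have := h ⟨i, Finset.mem_range.mp hi⟩
        simp only [vecMulLeft, LinearMap.coe_mk, AddHom.coe_mk] at *
        simp [this]

/-- PBH eigenvector test over ℂ: the controllability matrix has full rank `N`
iff no nonzero left eigenvector `v` of `A` (i.e. `vᵀA = λvᵀ`) satisfies `vᵀB = 0`. -/
theorem pbh_test (N M : ℕ)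
    (A : Matrix (Fin N) (Fin N) ℂ) (B : Matrix (Fin N) (Fin M) ℂ) :
    (Matrix.of fun (i : Fin N) (p : Fin N × Fin M) =>
        (A ^ (p.1 : ℕ) * B) i p.2).rank = N ↔
    ∀ v : Fin N → ℂ, v ≠ 0 → ∀ μ : ℂ, A.vecMul v = μ • v → B.vecMul v ≠ 0 := by
  set C : Matrix (Fin N) (Fin N × Fin M) ℂ :=
    Matrix.of fun (i : Fin N) (p : Fin N × Fin M) => (A ^ (p.1 : ℕ) * B) i p.2 with hC
  have hvecMul : ∀ (v : Fin N → ℂ) (p : Fin N × Fin M),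
      C.vecMul v p = (A ^ (p.1 : ℕ) * B).vecMul v p.2 := by
    intro v p; simp [hC, Matrix.vecMul, dotProduct]
  -- rank = N ↔ left kernel trivial
  have hrank : C.rank = N ↔ ∀ v : Fin N → ℂ, C.vecMul v = 0 → v = 0 := by
    constructor
    · intro hr v hv
      have hli : LinearIndependent ℂ (fun i => C i) := by
        change LinearIndependent ℂ C.row
        rw [linearIndependent_iff_card_eq_finrank_span, Fintype.card_fin, Set.finrank,
          ← Matrix.rank_eq_finrank_span_row, hr]
      have hinj : Function.Injective C.vecMul := Matrix.vecMul_injective_iff.mpr hli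
      have := hinj (a₁ := v) (a₂ := 0) (by simpa [Matrix.zero_vecMul] using hv)
      exact this
    · intro hker
      have hli : LinearIndependent ℂ (fun i => C i) := by
        change LinearIndependent ℂ C.row
        rw [← Matrix.vecMul_injective_iff]
        intro x y hxy
        have hxy' : x ᵥ* C = y ᵥ* C := hxy
        have : C.vecMul (x - y) = 0 := by
          rw [Matrix.sub_vecMul, hxy', sub_self]
        have := hker _ this
        exact sub_eq_zero.mp this
      simpa [Fintype.card_fin] using hli.rank_matrix
  rw [hrank]
  constructor
  · -- kernel trivial → PBH
    intro hker v hv μ hvA hvB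
    apply hv
    apply hker
    ext p
    have hpow : ∀ k : ℕ, (A ^ k).vecMul v = μ ^ k • v := by
      intro k
      induction k with
      | zero => simp
      | succ k ih =>
          rw [pow_succ, ← Matrix.vecMul_vecMul, ih, Matrix.smul_vecMul, hvA,
            smul_smul, pow_succ]
    rw [hvecMul, ← Matrix.vecMul_vecMul, hpow, Matrix.smul_vecMul, hvB]
    simp
  · -- PBH → kernel trivial
    intro hpbh v hv
    by_contra hv0
    rcases Nat.eq_zero_or_pos N with hN | hN
    · exact hv0 (funext fun i => absurd i.2 (by omega))
    have hall : ∀ k : ℕ, (A ^ k * B).vecMul v = 0 := by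
      refine vecMul_pow_mul_eq_zero hN A B v (fun i => ?_)
      ext j
      have := congrFun hv (i, j)
      rw [hvecMul] at this
      simpa using this
    -- the invariant subspace
    set W : Submodule ℂ (Fin N → ℂ) :=
      { carrier := {w | ∀ k : ℕ, (A ^ k * B).vecMul w = 0}
        add_mem' := by
          intro a b ha hb k
          rw [Matrix.add_vecMul, ha k, hb k, add_zero]
        zero_mem' := fun k => Matrix.zero_vecMul _
        smul_mem' := by
          intro c a ha k
          rw [Matrix.smul_vecMul, ha k, smul_zero] } with hW
    have hvW : v ∈ W := hall
    have hWinv : ∀ w ∈ W, A.vecMulLinear w ∈ W := by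
      intro w hw k
      have : (A ^ k * B).vecMul (A.vecMul w) = (A ^ (k + 1) * B).vecMul w := by
        rw [Matrix.vecMul_vecMul, ← Matrix.mul_assoc, ← pow_succ']
      simpa [Matrix.vecMulLinear_apply] using this.trans (hw (k + 1))
    haveI : Nontrivial W := Submodule.nontrivial_iff_ne_bot.mpr (by
      intro hbot
      exact hv0 ((Submodule.eq_bot_iff W).mp hbot v hvW))
    obtain ⟨μ, hμ⟩ := Module.End.exists_eigenvalue ((Matrix.vecMulLinear A).restrict hWinv)
    obtain ⟨⟨w, hwW⟩, hw⟩ := hμ.exists_hasEigenvector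
    have hwne' : w ≠ 0 := fun h => hw.right (Subtype.ext h)
    have hweq : A.vecMul w = μ • w := by
      have := congrArg Subtype.val hw.apply_eq_smul
      simpa [LinearMap.restrict_apply, Matrix.vecMulLinear_apply] using this
    have hwB : B.vecMul w = 0 := by simpa using hwW 0
    exact hpbh w hwne' μ hweq hwB
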